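/- Let ε, γ > 0 with ε < 1. Let X be an ℝ^d-valued random variable with mean μ_X and Cov[X] ⪯ γ·I_d, and define the truncated variable X' = X if ‖X − μ_X‖₂ ≤ 2√(γd/ε) and X' = μ_X otherwise. Let μ' = E[X']. Then ‖μ' − μ_X‖₂² ≤ 6γε/(1 − 3γε) when 3γε < 1; in particular ‖μ' − μ_X‖₂ = O(√(γε)). Specifically, writing b = μ' − μ_X, one has ‖b‖₂⁴ ≤ 3γε(2‖b‖₂² + ‖b‖₂⁴). -/

import Mathlib

open MeasureTheory

theorem stmt_7 {d : ℕ} {Ω : Type*} [MeasurableSpace Ω] (μ : Measure Ω)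
    [IsProbabilityMeasure μ] (X : Ω → Fin d → ℝ) (hmeas : Measurable X)
    (ε γ : ℝ) (hε : 0 < ε) (hε1 : ε < 1) (hγ : 0 < γ)
    (hint : ∀ i j, Integrable (fun ω => X ω i * X ω j) μ)
    (μX : Fin d → ℝ) (hμX : ∀ i, μX i = ∫ ω, X ω i ∂μ)
    (Cov : Matrix (Fin d) (Fin d) ℝ)
    (hCov : ∀ i j, Cov i j = ∫ ω, (X ω i - μX i) * (X ω j - μX j) ∂μ)
    (hCovBound : (γ • (1 : Matrix (Fin d) (Fin d) ℝ) - Cov).PosSemidef)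
    (X' : Ω → Fin d → ℝ)
    (hX' : ∀ ω, X' ω =
      if Real.sqrt (∑ i, (X ω i - μX i) ^ 2) ≤ 2 * Real.sqrt (γ * d / ε) then X ω else μX)
    (μ' : Fin d → ℝ) (hμ' : ∀ i, μ' i = ∫ ω, X' ω i ∂μ)
    (b2 : ℝ) (hb2 : b2 = ∑ i, (μ' i - μX i) ^ 2) :
    b2 ^ 2 ≤ 3 * γ * ε * (2 * b2 + b2 ^ 2) ∧
    (3 * γ * ε < 1 → b2 ≤ 6 * γ * ε / (1 - 3 * γ * ε)) := by
  have hb2nn : 0 ≤ b2 := hb2 ▸ Finset.sum_nonneg fun i _ => sq_nonneg _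
  have key : b2 ≤ γ * ε / 4 := by
    -- measurability of coordinates
    have hXm : ∀ i, Measurable fun ω => X ω i := fun i => (measurable_pi_apply i).comp hmeas
    -- integrability of coordinates
    have hXint : ∀ i, Integrable (fun ω => X ω i) μ := by
      intro i
      refine ((hint i i).add (integrable_const 1)).mono' (hXm i).aestronglyMeasurable
        (ae_of_all _ fun ω => ?_)
      simp only [Real.norm_eq_abs, Pi.add_apply]
      nlinarith [sq_nonneg (|X ω i| - 1), sq_abs (X ω i), abs_nonneg (X ω i)]
    have hprodc : ∀ i j, Integrable (fun ω => (X ω i - μX i) * (X ω j - μX j)) μ := by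
      intro i j
      have h : (fun ω => (X ω i - μX i) * (X ω j - μX j)) =
          fun ω => X ω i * X ω j - μX i * X ω j - μX j * X ω i + μX i * μX j := by
        funext ω; ring
      rw [h]
      exact (((hint i j).sub ((hXint j).const_mul _)).sub ((hXint i).const_mul _)).add
        (integrable_const _)
    -- the quadratic form bound
    have hform : ∀ v : Fin d → ℝ, ∑ i, ∑ j, v i * Cov i j * v j ≤ γ * ∑ i, (v i) ^ 2 := by
      intro v
      have h := hCovBound.dotProduct_mulVec_nonneg v
      simp only [dotProduct, Matrix.mulVec, Pi.star_apply, star_trivial,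
        Matrix.sub_apply, Matrix.smul_apply, Matrix.one_apply, smul_eq_mul, mul_ite,
        mul_one, mul_zero] at h
      have hexp : ∑ i, v i * ∑ j, ((if i = j then γ else 0) - Cov i j) * v j
          = γ * ∑ i, (v i) ^ 2 - ∑ i, ∑ j, v i * Cov i j * v j := by
        rw [Finset.mul_sum, ← Finset.sum_sub_distrib]
        refine Finset.sum_congr rfl fun i _ => ?_
        have h1 : ∑ j, ((if i = j then γ else 0) - Cov i j) * v j
            = γ * v i - ∑ j, Cov i j * v j := by
          simp [sub_mul, Finset.sum_sub_distrib, ite_mul, Finset.sum_ite_eq]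
        rw [h1, mul_sub, Finset.mul_sum]
        congr 1
        · ring
        · exact Finset.sum_congr rfl fun j _ => by ring
      rw [hexp] at h
      linarith
    -- setup
    set R : ℝ := 2 * Real.sqrt (γ * d / ε) with hRdef
    set g : Ω → ℝ := fun ω => ∑ i, (X ω i - μX i) ^ 2 with hgdef
    set A : Set Ω := {ω | ¬ Real.sqrt (g ω) ≤ R} with hAdef
    have hRnn : 0 ≤ R := by positivity
    have hR2 : R ^ 2 = 4 * (γ * d / ε) := by
      rw [hRdef, mul_pow, Real.sq_sqrt (by positivity)]; ring
    have hgnn : ∀ ω, 0 ≤ g ω := fun ω => Finset.sum_nonneg fun i _ => sq_nonneg _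
    have hgm : Measurable g := by
      apply Finset.measurable_sum
      intro i _
      exact ((hXm i).sub measurable_const).pow_const 2
    have hAm : MeasurableSet A := by
      have : A = {ω | R < Real.sqrt (g ω)} := by
        ext ω; simp [hAdef, not_le]
      rw [this]
      exact measurableSet_lt measurable_const hgm.sqrt
    have hgint : Integrable g μ := by
      apply integrable_finset_sum
      intro i _
      simpa [sq] using hprodc i i
    have hCovDiag : ∀ i, Cov i i ≤ γ := by
      intro i
      have h := hform (Pi.single i 1)
      simpa [Pi.single_apply, ite_mul, mul_ite, Finset.sum_ite_eq] using h
    have hIg : ∫ ω, g ω ∂μ ≤ γ * d := by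
      have h1 : ∫ ω, g ω ∂μ = ∑ i, Cov i i := by
        rw [hgdef]
        rw [integral_finset_sum _ fun i _ => by simpa [sq] using hprodc i i]
        exact Finset.sum_congr rfl fun i _ => by rw [hCov i i]; simp [sq]
      rw [h1]
      calc ∑ i, Cov i i ≤ ∑ _i : Fin d, γ := Finset.sum_le_sum fun i _ => hCovDiag i
        _ = γ * d := by simp [mul_comm]
    -- Markov
    have hμA : (μ A).toReal ≤ ε / 4 := by
      rcases Nat.eq_zero_or_pos d with hd | hd
      · have hAe : A = ∅ := by
          ext ω
          subst hd
          simp [hAdef, hgdef, hRnn]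
        simp [hAe]
        linarith
      · have hmark := mul_meas_ge_le_integral_of_nonneg (ae_of_all _ hgnn) hgint (R ^ 2)
        have hsub : A ⊆ {ω | R ^ 2 ≤ g ω} := by
          intro ω hω
          simp only [hAdef, Set.mem_setOf_eq, not_le] at hω
          have h2 : R * R ≤ Real.sqrt (g ω) * Real.sqrt (g ω) :=
            mul_self_le_mul_self hRnn hω.le
          have h3 : Real.sqrt (g ω) * Real.sqrt (g ω) = g ω := Real.mul_self_sqrt (hgnn ω)
          show R ^ 2 ≤ g ω
          rw [pow_two]
          linarith
        have hmono : (μ A).toReal ≤ (μ {ω | R ^ 2 ≤ g ω}).toReal :=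
          ENNReal.toReal_mono (measure_ne_top _ _) (measure_mono hsub)
        have hdpos : (0:ℝ) < γ * d := by
          have : (1:ℝ) ≤ d := by exact_mod_cast hd
          nlinarith
        set m' : ℝ := (μ {ω | R ^ 2 ≤ g ω}).toReal with hm'def
        have hμnn : (0:ℝ) ≤ m' := ENNReal.toReal_nonneg
        have h2 : R ^ 2 * m' ≤ γ * d := hmark.trans hIg
        rw [hR2] at h2
        have h3 : (4 * (γ * ↑d / ε) * m') * ε ≤ (γ * ↑d) * ε :=
          mul_le_mul_of_nonneg_right h2 hε.le
        have h4 : (4 * (γ * ↑d / ε) * m') * ε = 4 * (γ * ↑d) * m' := by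
          field_simp
        rw [h4] at h3
        have h5 : 4 * (γ * ↑d) * (μ A).toReal ≤ 4 * (γ * ↑d) * m' :=
          mul_le_mul_of_nonneg_left hmono (by positivity)
        nlinarith [ENNReal.toReal_nonneg (a := μ A)]
    -- characterization of the bias
    set b : Fin d → ℝ := fun i => μ' i - μX i with hbdef
    have hdiff : ∀ i ω, X' ω i - X ω i = A.indicator (fun ω => μX i - X ω i) ω := by
      intro i ω
      rw [hX' ω]
      by_cases h : Real.sqrt (∑ i, (X ω i - μX i) ^ 2) ≤ 2 * Real.sqrt (γ * d / ε)
      · have hω : ω ∉ A := fun hh => hh h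
        simp [hRdef, h, Set.indicator_of_notMem hω]
      · have hω : ω ∈ A := h
        simp [hRdef, h, Set.indicator_of_mem hω]
    have hindint : ∀ i, Integrable (A.indicator fun ω => μX i - X ω i) μ :=
      fun i => ((integrable_const _).sub (hXint i)).indicator hAm
    have hX'int : ∀ i, Integrable (fun ω => X' ω i) μ := by
      intro i
      have h : (fun ω => X' ω i) = fun ω => X ω i + A.indicator (fun ω => μX i - X ω i) ω := by
        funext ω; rw [← hdiff i ω]; ring
      rw [h]
      exact (hXint i).add (hindint i)
    have hbi : ∀ i, b i = ∫ ω in A, (μX i - X ω i) ∂μ := by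
      intro i
      have h1 : ∫ ω, (X' ω i - X ω i) ∂μ = ∫ ω in A, (μX i - X ω i) ∂μ := by
        simp_rw [hdiff i]
        exact integral_indicator hAm
      calc b i = μ' i - μX i := rfl
        _ = ∫ ω, X' ω i ∂μ - ∫ ω, X ω i ∂μ := by rw [hμ' i, ← hμX i]
        _ = ∫ ω, (X' ω i - X ω i) ∂μ := (integral_sub (hX'int i) (hXint i)).symm
        _ = _ := h1
    -- the test function
    set f : Ω → ℝ := fun ω => ∑ i, b i * (μX i - X ω i) with hfdef
    have hfint : Integrable f μ :=
      integrable_finset_sum _ fun i _ => ((integrable_const _).sub (hXint i)).const_mul _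
    have hcoord : ∀ i, Integrable (fun ω => μX i - X ω i) μ := by
      intro i
      exact (integrable_const (μX i)).sub (hXint i)
    have hIA : ∫ ω in A, f ω ∂μ = b2 := by
      have h0 : ∫ ω in A, f ω ∂μ = ∑ i, ∫ ω in A, b i * (μX i - X ω i) ∂μ := by
        simp only [hfdef]
        exact integral_finset_sum _ fun i _ =>
          (((hcoord i).const_mul (b i)) : Integrable (fun ω => b i * (μX i - X ω i)) μ).integrableOn
      rw [h0, hb2]
      refine Finset.sum_congr rfl fun i _ => ?_
      rw [integral_const_mul, ← hbi i]
      simp only [hbdef]; ring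
    have hf2 : ∀ ω, f ω ^ 2 = ∑ i, ∑ j, (b i * b j) * ((X ω i - μX i) * (X ω j - μX j)) := by
      intro ω
      rw [hfdef, sq, Finset.sum_mul_sum]
      exact Finset.sum_congr rfl fun i _ => Finset.sum_congr rfl fun j _ => by ring
    have hf2int : Integrable (fun ω => f ω ^ 2) μ := by
      simp_rw [hf2]
      exact integrable_finset_sum _ fun i _ =>
        integrable_finset_sum _ fun j _ => (hprodc i j).const_mul _
    have hIf2 : ∫ ω, f ω ^ 2 ∂μ ≤ γ * b2 := by
      have h1 : ∫ ω, f ω ^ 2 ∂μ = ∑ i, ∑ j, b i * Cov i j * b j := by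
        simp_rw [hf2]
        rw [integral_finset_sum _ fun i _ =>
          integrable_finset_sum _ fun j _ => (hprodc i j).const_mul _]
        refine Finset.sum_congr rfl fun i _ => ?_
        rw [integral_finset_sum _ fun j _ => (hprodc i j).const_mul _]
        refine Finset.sum_congr rfl fun j _ => ?_
        rw [integral_const_mul, hCov i j]
        ring
      rw [h1, hb2]
      exact hform b
    have hf2nn : (0:ℝ) ≤ ∫ ω, f ω ^ 2 ∂μ := integral_nonneg fun ω => sq_nonneg _
    -- Cauchy-Schwarz on A
    have hCS : b2 ^ 2 ≤ (μ A).toReal * ∫ ω, f ω ^ 2 ∂μ := by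
      set m : ℝ := (μ A).toReal with hmdef
      rcases eq_or_lt_of_le (ENNReal.toReal_nonneg : (0:ℝ) ≤ m) with hm | hm
      · have h0 : (μ A).toReal = 0 := hm.symm
        have hμA0 : μ A = 0 :=
          ((ENNReal.toReal_eq_zero_iff _).mp h0).resolve_right (measure_ne_top μ A)
        have hz : ∫ ω in A, f ω ∂μ = 0 := by
          rw [Measure.restrict_eq_zero.mpr hμA0, integral_zero_measure]
        rw [← hIA, hz]
        simpa using mul_nonneg ENNReal.toReal_nonneg hf2nn
      · have hrest : ∀ h : Ω → ℝ, Integrable h μ → Integrable h (μ.restrict A) :=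
          fun h hh => hh.restrict
        set I : ℝ := ∫ ω in A, f ω ∂μ with hIdef
        have hexp : (0:ℝ) ≤ ∫ ω in A, (f ω - I / m) ^ 2 ∂μ :=
          integral_nonneg fun ω => sq_nonneg _
        have hi1 : Integrable (fun ω => 2 * (I / m) * f ω) (μ.restrict A) :=
          (hrest _ hfint).const_mul _
        have hi2 : Integrable (fun ω => f ω ^ 2 - 2 * (I / m) * f ω) (μ.restrict A) :=
          (hrest _ hf2int).sub hi1
        have hexpand : ∫ ω in A, (f ω - I / m) ^ 2 ∂μ
            = (∫ ω in A, f ω ^ 2 ∂μ) - 2 * (I / m) * I + (I / m) ^ 2 * m := by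
          have e1 : (fun ω => (f ω - I / m) ^ 2)
              = fun ω => (f ω ^ 2 - 2 * (I / m) * f ω) + (I / m) ^ 2 := by
            funext ω; ring
          calc ∫ ω in A, (f ω - I / m) ^ 2 ∂μ
              = ∫ ω in A, ((f ω ^ 2 - 2 * (I / m) * f ω) + (I / m) ^ 2) ∂μ := by rw [e1]
            _ = (∫ ω in A, (f ω ^ 2 - 2 * (I / m) * f ω) ∂μ)
                + ∫ _ω in A, (I / m) ^ 2 ∂μ := integral_add hi2 (integrable_const _)
            _ = ((∫ ω in A, f ω ^ 2 ∂μ) - ∫ ω in A, 2 * (I / m) * f ω ∂μ)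
                + ∫ _ω in A, (I / m) ^ 2 ∂μ := by
                  rw [integral_sub (hrest _ hf2int) hi1]
            _ = (∫ ω in A, f ω ^ 2 ∂μ) - 2 * (I / m) * I + (I / m) ^ 2 * m := by
                  rw [integral_const_mul, setIntegral_const, ← hIdef, smul_eq_mul, measureReal_def, ← hmdef]
                  ring
        have hfA : ∫ ω in A, f ω ^ 2 ∂μ ≤ ∫ ω, f ω ^ 2 ∂μ :=
          setIntegral_le_integral hf2int (ae_of_all _ fun ω => sq_nonneg _)
        have h2 : (0:ℝ) ≤ (∫ ω in A, f ω ^ 2 ∂μ) - I ^ 2 / m := by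
          rw [hexpand] at hexp
          have : 2 * (I / m) * I - (I / m) ^ 2 * m = I ^ 2 / m := by
            field_simp; ring
          nlinarith
        have h3 : I ^ 2 ≤ m * ∫ ω in A, f ω ^ 2 ∂μ := by
          have h4 : I ^ 2 / m ≤ ∫ ω in A, f ω ^ 2 ∂μ := by linarith
          calc I ^ 2 = (I ^ 2 / m) * m := by rw [div_mul_cancel₀ _ hm.ne']
            _ ≤ (∫ ω in A, f ω ^ 2 ∂μ) * m := mul_le_mul_of_nonneg_right h4 hm.le
            _ = m * ∫ ω in A, f ω ^ 2 ∂μ := mul_comm _ _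
        calc b2 ^ 2 = I ^ 2 := by rw [hIA]
          _ ≤ m * ∫ ω in A, f ω ^ 2 ∂μ := h3
          _ ≤ m * ∫ ω, f ω ^ 2 ∂μ := by
              exact mul_le_mul_of_nonneg_left hfA hm.le
    -- combine
    have hfinal : b2 ^ 2 ≤ (ε / 4) * (γ * b2) := by
      calc b2 ^ 2 ≤ (μ A).toReal * ∫ ω, f ω ^ 2 ∂μ := hCS
        _ ≤ (ε / 4) * (γ * b2) := by
            apply mul_le_mul hμA hIf2 hf2nn (by linarith)
    rcases eq_or_lt_of_le hb2nn with hb0 | hb0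
    · rw [← hb0]; positivity
    · nlinarith
  refine ⟨?_, fun h3 => ?_⟩
  · nlinarith [mul_nonneg (mul_nonneg hγ.le hε.le) hb2nn, sq_nonneg b2,
      mul_pos hγ hε]
  · rw [le_div_iff₀ (by linarith)]
    nlinarith [mul_nonneg (mul_nonneg (mul_nonneg (by norm_num : (0:ℝ) ≤ 3) hγ.le) hε.le) hb2nn]
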